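/- arXiv:2005.13796 — 4 statements merged into one kernel-verified Lean document; each statement's English description precedes it below -/
import Mathlib

section
/- The minimum value of the ridge regression objective ‖F^T X + b 1^T - Y‖_F^2 + ρ‖F‖_F^2 over F and b equals ‖Y C‖_F^2 - trace((X C X^T + ρI)^{-1} X C Y^T Y C X^T); i.e., MRLSE = ‖YC‖_F^2 - DI. -/
open Matrix

/-- Squared Frobenius norm. -/
def frobSq {m n : Type*} [Fintype m] [Fintype n] (M : Matrix m n ℝ) : ℝ :=
  (M * Mᵀ).trace

lemma frobSq_nonneg {m n : Type*} [Fintype m] [Fintype n] (M : Matrix m n ℝ) :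
    0 ≤ frobSq M := by
  simp only [frobSq, Matrix.trace, Matrix.diag, Matrix.mul_apply, Matrix.transpose_apply]
  apply Finset.sum_nonneg; intro i _
  apply Finset.sum_nonneg; intro j _
  exact mul_self_nonneg _

set_option maxHeartbeats 1600000 in
/-- The minimum ridge least-square error equals `‖YC‖_F² − DI`. -/
theorem mrlse_eq (d N c : ℕ)
    (X : Matrix (Fin d) (Fin N) ℝ) (Y : Matrix (Fin c) (Fin N) ℝ)
    (C : Matrix (Fin N) (Fin N) ℝ)
    (hC : C = (1 : Matrix (Fin N) (Fin N) ℝ) -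
      (N : ℝ)⁻¹ • vecMulVec (fun _ => (1 : ℝ)) (fun _ => (1 : ℝ)))
    (ρ : ℝ) (hρ : 0 < ρ)
    (f : Matrix (Fin d) (Fin c) ℝ → (Fin c → ℝ) → ℝ)
    (hf : ∀ F b, f F b =
      frobSq (Fᵀ * X + vecMulVec b (fun _ => (1 : ℝ)) - Y) + ρ * frobSq F)
    (DI : ℝ)
    (hDI : DI = ((X * C * Xᵀ + ρ • (1 : Matrix (Fin d) (Fin d) ℝ))⁻¹ *
      (X * C * Yᵀ * Y * C * Xᵀ)).trace) :
    IsLeast (Set.range fun p : Matrix (Fin d) (Fin c) ℝ × (Fin c → ℝ) => f p.1 p.2)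
      (frobSq (Y * C) - DI) := by
  set u : Fin N → ℝ := fun _ => (1 : ℝ) with hu
  -- basic facts about C
  have hCt : Cᵀ = C := by
    rw [hC]; ext i j
    simp [vecMulVec_apply, Matrix.one_apply, eq_comm, hu]
  have hJJ : vecMulVec u u * vecMulVec u u = (N : ℝ) • vecMulVec u u := by
    ext i j; simp [Matrix.mul_apply, vecMulVec_apply, hu]
  have ha : ((N:ℝ)⁻¹ • vecMulVec u u) * ((N:ℝ)⁻¹ • vecMulVec u u)
      = (N:ℝ)⁻¹ • vecMulVec u u := by
    rw [smul_mul_assoc, mul_smul_comm, hJJ]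
    rw [smul_smul, smul_smul]
    congr 1
    rcases eq_or_ne (N:ℝ) 0 with h | h
    · simp [h]
    · field_simp
  have hCC : C * C = C := by
    rw [hC, Matrix.sub_mul, Matrix.mul_sub, Matrix.mul_sub, Matrix.one_mul, Matrix.mul_one, ha]
    simp only [Matrix.one_mul, Matrix.mul_one]
    abel
  have hCCa : ∀ {k : ℕ} (Z : Matrix (Fin N) (Fin k) ℝ), C * (C * Z) = C * Z := by
    intro k Z; rw [← Matrix.mul_assoc, hCC]
  -- b-direction facts
  have huC : ∀ (v : Fin c → ℝ), vecMulVec v u * C = 0 := by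
    intro v; ext i j
    have hN : (0:ℝ) < N := by exact_mod_cast j.pos
    simp [Matrix.mul_apply, hC, vecMulVec_apply, Matrix.sub_apply, Matrix.one_apply, hu,
      mul_sub, Finset.sum_sub_distrib, Finset.sum_ite_eq', hN.ne']
    field_simp
    ring
  -- the positive definite matrix M
  set M : Matrix (Fin d) (Fin d) ℝ := X * C * Xᵀ + ρ • 1 with hM
  have hMt : Mᵀ = M := by
    rw [hM, transpose_add, transpose_smul, transpose_one, transpose_mul, transpose_mul,
      transpose_transpose, hCt, Matrix.mul_assoc]
  have hpsd : (X * C * Xᵀ).PosSemidef := by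
    have h := Matrix.posSemidef_self_mul_conjTranspose (X * C)
    rwa [conjTranspose_eq_transpose_of_trivial, transpose_mul, hCt, Matrix.mul_assoc,
      hCCa, ← Matrix.mul_assoc] at h
  have hρ1 : ((ρ : ℝ) • (1 : Matrix (Fin d) (Fin d) ℝ)).PosDef := by
    exact Matrix.PosDef.one.smul hρ
  have hMpd : M.PosDef := Matrix.PosDef.posSemidef_add hpsd hρ1
  have hdet : IsUnit M.det := hMpd.det_pos.ne'.isUnit
  have hMiM : M⁻¹ * M = 1 := Matrix.nonsing_inv_mul M hdet
  have hMMi : M * M⁻¹ = 1 := Matrix.mul_nonsing_inv M hdet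
  have hMit : M⁻¹ᵀ = M⁻¹ := by rw [Matrix.transpose_nonsing_inv, hMt]
  set B : Matrix (Fin d) (Fin c) ℝ := X * C * Yᵀ with hB
  set Fs : Matrix (Fin d) (Fin c) ℝ := M⁻¹ * B with hFs
  have hMFs : M * Fs = B := by
    rw [hFs]
    rw [← Matrix.mul_assoc, hMMi, Matrix.one_mul]
  have hFstM : Fsᵀ * M = Bᵀ := by
    rw [hFs, transpose_mul, hMit, Matrix.mul_assoc, hMiM, Matrix.mul_one]
  have hBt : Bᵀ = Y * C * Xᵀ := by
    rw [hB, transpose_mul, transpose_mul, transpose_transpose, hCt, Matrix.mul_assoc]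
  -- rewriting rules for the central identity
  have hB1 : X * (C * Yᵀ) = M * Fs := by rw [hMFs, hB, Matrix.mul_assoc]
  have hB2 : ∀ {k : ℕ} (Z : Matrix (Fin d) (Fin k) ℝ),
      Y * (C * (Xᵀ * Z)) = Fsᵀ * (M * Z) := by
    intro k Z
    calc Y * (C * (Xᵀ * Z)) = (Y * C * Xᵀ) * Z := by simp [Matrix.mul_assoc]
      _ = (Fsᵀ * M) * Z := by rw [← hBt, ← hFstM]
      _ = Fsᵀ * (M * Z) := by rw [Matrix.mul_assoc]
  have hB3 : ∀ {k : ℕ} (Z : Matrix (Fin d) (Fin k) ℝ),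
      X * (C * (Xᵀ * Z)) = M * Z - ρ • Z := by
    intro k Z
    rw [show X * (C * (Xᵀ * Z)) = X * C * Xᵀ * Z by simp [Matrix.mul_assoc], hM,
      Matrix.add_mul, Matrix.smul_mul, Matrix.one_mul]
    abel
  -- DI re-expressed
  have hDI' : DI = (Fsᵀ * (M * Fs)).trace := by
    rw [hDI]
    have h1 : B * Y * C * Xᵀ = B * Bᵀ := by rw [hBt]; simp [Matrix.mul_assoc]
    rw [h1, ← Matrix.mul_assoc, ← hFs, Matrix.trace_mul_comm, ← hFstM, Matrix.mul_assoc]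
  -- the central matrix identity
  have mid : ∀ F : Matrix (Fin d) (Fin c) ℝ,
      ((Fᵀ * X - Y) * C) * ((Fᵀ * X - Y) * C)ᵀ + ρ • (Fᵀ * F)
      = ((X * C)ᵀ * (F - Fs))ᵀ * ((X * C)ᵀ * (F - Fs)) + ρ • ((F - Fs)ᵀ * (F - Fs))
        + (Y * C) * (Y * C)ᵀ - Fsᵀ * (M * Fs) := by
    intro F
    simp only [transpose_mul, transpose_sub, transpose_transpose, hCt,
      Matrix.sub_mul, Matrix.mul_sub, Matrix.mul_assoc, hCCa, hB1, hB2, hB3,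
      Matrix.mul_smul, Matrix.smul_mul, smul_sub, smul_smul]
    abel
  -- key trace identity
  have key : ∀ F : Matrix (Fin d) (Fin c) ℝ,
      frobSq ((Fᵀ * X - Y) * C) + ρ * frobSq F
      = frobSq ((X * C)ᵀ * (F - Fs)) + ρ * frobSq (F - Fs)
        + (frobSq (Y * C) - DI) := by
    intro F
    have h1 : frobSq ((Fᵀ * X - Y) * C) + ρ * frobSq F
        = (((Fᵀ * X - Y) * C) * ((Fᵀ * X - Y) * C)ᵀ + ρ • (Fᵀ * F)).trace := by
      rw [Matrix.trace_add, Matrix.trace_smul, frobSq, frobSq,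
        Matrix.trace_mul_comm F Fᵀ]
      rfl
    have h2 : frobSq ((X * C)ᵀ * (F - Fs)) + ρ * frobSq (F - Fs)
        + (frobSq (Y * C) - DI)
        = (((X * C)ᵀ * (F - Fs))ᵀ * ((X * C)ᵀ * (F - Fs)) + ρ • ((F - Fs)ᵀ * (F - Fs))
            + (Y * C) * (Y * C)ᵀ - Fsᵀ * (M * Fs)).trace := by
      rw [Matrix.trace_sub, Matrix.trace_add, Matrix.trace_add, Matrix.trace_smul,
        frobSq, frobSq, frobSq, hDI',
        Matrix.trace_mul_comm ((X * C)ᵀ * (F - Fs)) (((X * C)ᵀ * (F - Fs))ᵀ),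
        Matrix.trace_mul_comm (F - Fs) (F - Fs)ᵀ]
      simp only [smul_eq_mul]
      ring
    rw [h1, h2, mid]
  -- orthogonal decomposition in the b-direction
  have dec : ∀ (R : Matrix (Fin c) (Fin N) ℝ),
      frobSq R = frobSq (R * C) + frobSq (R * (1 - C)) := by
    intro R
    have hmid : R * C * (R * C)ᵀ + (R * (1 - C)) * (R * (1 - C))ᵀ = R * Rᵀ := by
      simp only [transpose_mul, transpose_sub, transpose_one, hCt,
        Matrix.mul_sub, Matrix.sub_mul, Matrix.mul_one, Matrix.one_mul,
        Matrix.mul_assoc, hCCa]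
      abel
    rw [frobSq, frobSq, frobSq, ← Matrix.trace_add, hmid]
  -- the lower bound
  constructor
  · -- membership : take F = Fs, b = bs
    set bs : Fin c → ℝ :=
      fun i => (N : ℝ)⁻¹ * ∑ k, (Y i k - (Fsᵀ * X) i k) with hbs
    refine ⟨(Fs, bs), ?_⟩
    have hR : Fsᵀ * X + vecMulVec bs u - Y = (Fsᵀ * X - Y) * C := by
      ext i j
      rw [hC]
      simp only [Matrix.mul_apply, Matrix.sub_apply, Matrix.add_apply,
        Matrix.smul_apply, Matrix.one_apply, vecMulVec_apply, hbs, hu,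
        smul_eq_mul, mul_sub, Finset.sum_sub_distrib, Finset.mul_sum]
      simp [Finset.sum_ite_eq', mul_comm, Finset.mul_sum, mul_sub]
      ring
    simp only [hf, hR, key Fs, sub_self, Matrix.mul_zero]
    simp [frobSq]
  · rintro y ⟨⟨F, b⟩, rfl⟩
    simp only [hf]
    set R : Matrix (Fin c) (Fin N) ℝ := Fᵀ * X + vecMulVec b u - Y with hRdef
    have hRC : R * C = (Fᵀ * X - Y) * C := by
      rw [hRdef, Matrix.sub_mul, Matrix.add_mul, huC, Matrix.sub_mul]
      abel
    have h1 : frobSq ((Fᵀ * X - Y) * C) + ρ * frobSq F ≤ frobSq R + ρ * frobSq F := by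
      have := dec R
      have h0 := frobSq_nonneg (R * (1 - C))
      nlinarith [hRC ▸ this]
    calc frobSq (Y * C) - DI
        ≤ frobSq ((Fᵀ * X - Y) * C) + ρ * frobSq F := by
          rw [key F]
          have h2 := frobSq_nonneg ((X * C)ᵀ * (F - Fs))
          have h3 := frobSq_nonneg (F - Fs)
          nlinarith
      _ ≤ frobSq R + ρ * frobSq F := h1
end

section
/- Non-decreasing property of DI (projection form): Let K̄ and K_B be the noise and signal matrices built from a feature matrix X. If the feature set T is a subset of S (i.e., X_T is obtained from X_S by deleting rows), then DI(T) ≤ DI(S), where DI(A) = trace((X_A C X_A^T + ρI)^{-1} X_A C Y^T Y C X_A^T) with ρ > 0. Equivalently: adding an extra feature row to X cannot decrease DI. -/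
open Matrix

lemma DI_trace_conj_nonneg {n c : ℕ} {A : Matrix (Fin n) (Fin n) ℝ} (hA : A.PosSemidef)
    (B : Matrix (Fin c) (Fin n) ℝ) : 0 ≤ (B * A * Bᵀ).trace := by
  rw [Matrix.trace]
  refine Finset.sum_nonneg fun i _ => ?_
  have h := hA.dotProduct_mulVec_nonneg (fun j => B i j)
  simp only [star_trivial] at h
  convert h using 1
  simp only [Matrix.diag, Matrix.mul_apply, dotProduct, Matrix.mulVec, Matrix.transpose_apply,
    Finset.sum_mul, Finset.mul_sum]
  rw [Finset.sum_comm]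
  exact Finset.sum_congr rfl fun k _ => Finset.sum_congr rfl fun j _ => by ring

lemma DI_posdef_key {n m : ℕ} (M : Matrix (Fin n) (Fin m) ℝ) {ρ : ℝ} (hρ : 0 < ρ) :
    (M * Mᵀ + ρ • (1 : Matrix (Fin n) (Fin n) ℝ)).PosDef := by
  have h1 : (M * Mᵀ).PosSemidef := by
    have := Matrix.posSemidef_self_mul_conjTranspose M
    simpa using this
  have h2 : (ρ • (1 : Matrix (Fin n) (Fin n) ℝ)).PosDef := by
    rw [smul_one_eq_diagonal]
    exact Matrix.posDef_diagonal_iff.mpr fun _ => hρ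
  exact Matrix.PosDef.posSemidef_add h1 h2

lemma DI_opt_core {n m c : ℕ} (M : Matrix (Fin n) (Fin m) ℝ) (Z : Matrix (Fin c) (Fin m) ℝ)
    {ρ : ℝ} (hρ : 0 < ρ) (W : Matrix (Fin c) (Fin n) ℝ) :
    2 * (W * (M * Zᵀ)).trace - (W * (M * Mᵀ + ρ • 1) * Wᵀ).trace
      ≤ ((M * Mᵀ + ρ • 1)⁻¹ * (M * Zᵀ * (Z * Mᵀ))).trace := by
  set A : Matrix (Fin n) (Fin n) ℝ := M * Mᵀ + ρ • 1 with hAdef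
  have hA : A.PosDef := DI_posdef_key M hρ
  have hdet : IsUnit A.det := (Matrix.isUnit_iff_isUnit_det A).1 hA.isUnit
  have hinv : A⁻¹ * A = 1 := Matrix.nonsing_inv_mul A hdet
  have hinv' : A * A⁻¹ = 1 := Matrix.mul_nonsing_inv A hdet
  have hAt : Aᵀ = A := by
    have := hA.isHermitian
    rwa [Matrix.IsHermitian, Matrix.conjTranspose_eq_transpose_of_trivial] at this
  have hAit : (A⁻¹)ᵀ = A⁻¹ := by rw [Matrix.transpose_nonsing_inv, hAt]
  set Wo : Matrix (Fin c) (Fin n) ℝ := Z * Mᵀ * A⁻¹ with hWo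
  have hWoA : Wo * A = Z * Mᵀ := by
    rw [hWo, Matrix.mul_assoc, hinv, Matrix.mul_one]
  have hWoT : Woᵀ = A⁻¹ * (M * Zᵀ) := by
    rw [hWo, Matrix.transpose_mul, hAit, Matrix.transpose_mul,
      Matrix.transpose_transpose]
  have h1 : (Wo * A * Wᵀ).trace = (W * (M * Zᵀ)).trace := by
    rw [hWoA, ← Matrix.trace_transpose, Matrix.transpose_mul, Matrix.transpose_mul,
      Matrix.transpose_transpose, Matrix.transpose_transpose]
  have h2 : (W * A * Woᵀ).trace = (W * (M * Zᵀ)).trace := by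
    rw [hWoT, Matrix.mul_assoc, ← Matrix.mul_assoc A, hinv', Matrix.one_mul]
  have h3 : (Wo * A * Woᵀ).trace = (A⁻¹ * (M * Zᵀ * (Z * Mᵀ))).trace := by
    rw [hWoA, hWoT, Matrix.trace_mul_comm, Matrix.mul_assoc, Matrix.mul_assoc]
  have hnn : 0 ≤ ((W - Wo) * A * (W - Wo)ᵀ).trace := DI_trace_conj_nonneg hA.posSemidef _
  have hexp : ((W - Wo) * A * (W - Wo)ᵀ).trace
      = (W * A * Wᵀ).trace - (W * A * Woᵀ).trace - (Wo * A * Wᵀ).trace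
        + (Wo * A * Woᵀ).trace := by
    simp only [Matrix.sub_mul, Matrix.mul_sub, Matrix.transpose_sub, Matrix.trace_sub]
    ring
  rw [hexp, h1, h2, h3] at hnn
  linarith

lemma DI_opt_eq {n m c : ℕ} (M : Matrix (Fin n) (Fin m) ℝ) (Z : Matrix (Fin c) (Fin m) ℝ)
    {ρ : ℝ} (hρ : 0 < ρ) :
    2 * ((Z * Mᵀ * (M * Mᵀ + ρ • 1)⁻¹) * (M * Zᵀ)).trace
      - ((Z * Mᵀ * (M * Mᵀ + ρ • 1)⁻¹) * (M * Mᵀ + ρ • 1)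
          * (Z * Mᵀ * (M * Mᵀ + ρ • 1)⁻¹)ᵀ).trace
      = ((M * Mᵀ + ρ • 1)⁻¹ * (M * Zᵀ * (Z * Mᵀ))).trace := by
  set A : Matrix (Fin n) (Fin n) ℝ := M * Mᵀ + ρ • 1 with hAdef
  have hA : A.PosDef := DI_posdef_key M hρ
  have hdet : IsUnit A.det := (Matrix.isUnit_iff_isUnit_det A).1 hA.isUnit
  have hinv : A⁻¹ * A = 1 := Matrix.nonsing_inv_mul A hdet
  have hAt : Aᵀ = A := by
    have := hA.isHermitian
    rwa [Matrix.IsHermitian, Matrix.conjTranspose_eq_transpose_of_trivial] at this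
  have hAit : (A⁻¹)ᵀ = A⁻¹ := by rw [Matrix.transpose_nonsing_inv, hAt]
  set Wo : Matrix (Fin c) (Fin n) ℝ := Z * Mᵀ * A⁻¹ with hWo
  have hWoA : Wo * A = Z * Mᵀ := by
    rw [hWo, Matrix.mul_assoc, hinv, Matrix.mul_one]
  have hWoT : Woᵀ = A⁻¹ * (M * Zᵀ) := by
    rw [hWo, Matrix.transpose_mul, hAit, Matrix.transpose_mul,
      Matrix.transpose_transpose]
  have h3 : (Wo * A * Woᵀ).trace = (A⁻¹ * (M * Zᵀ * (Z * Mᵀ))).trace := by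
    rw [hWoA, hWoT, Matrix.trace_mul_comm, Matrix.mul_assoc, Matrix.mul_assoc]
  have h2 : (Wo * (M * Zᵀ)).trace = (A⁻¹ * (M * Zᵀ * (Z * Mᵀ))).trace := by
    rw [hWo, Matrix.trace_mul_comm, ← Matrix.mul_assoc, Matrix.trace_mul_comm,
      Matrix.mul_assoc]
  rw [h3, h2]; ring

/-- Non-decreasing property of DI: deleting rows of the feature matrix cannot
increase DI.  Here `X_T = X_S.submatrix f id` for an injective `f`. -/
theorem DI_nondecreasing (d k N c : ℕ)
    (XS : Matrix (Fin d) (Fin N) ℝ) (Y : Matrix (Fin c) (Fin N) ℝ)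
    (C : Matrix (Fin N) (Fin N) ℝ)
    (hC : C = (1 : Matrix (Fin N) (Fin N) ℝ) -
      (N : ℝ)⁻¹ • vecMulVec (fun _ => (1 : ℝ)) (fun _ => (1 : ℝ)))
    (ρ : ℝ) (hρ : 0 < ρ)
    (f : Fin k → Fin d) (hf : Function.Injective f)
    (XT : Matrix (Fin k) (Fin N) ℝ) (hXT : XT = XS.submatrix f id) :
    ((XT * C * XTᵀ + ρ • (1 : Matrix (Fin k) (Fin k) ℝ))⁻¹ *
        (XT * C * Yᵀ * Y * C * XTᵀ)).trace ≤
      ((XS * C * XSᵀ + ρ • (1 : Matrix (Fin d) (Fin d) ℝ))⁻¹ *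
        (XS * C * Yᵀ * Y * C * XSᵀ)).trace := by
  -- C is symmetric and idempotent
  have hCsymm : Cᵀ = C := by
    subst hC
    ext i j
    simp [Matrix.transpose_apply, Matrix.sub_apply, Matrix.one_apply, Matrix.vecMulVec_apply,
      eq_comm]
  have hC2 : C * C = C := by
    subst hC
    ext i j
    have hN : 0 < N := i.pos
    have hN' : (N : ℝ) ≠ 0 := by positivity
    simp only [Matrix.mul_apply, Matrix.sub_apply, Matrix.one_apply, Matrix.smul_apply,
      Matrix.vecMulVec_apply, smul_eq_mul, mul_one]
    rw [Finset.sum_congr rfl (fun k _ => by ring :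
      ∀ k ∈ Finset.univ, ((if i = k then (1:ℝ) else 0) - (N:ℝ)⁻¹) *
        ((if k = j then (1:ℝ) else 0) - (N:ℝ)⁻¹)
        = (if i = k then (1:ℝ) else 0) * (if k = j then (1:ℝ) else 0)
          - (N:ℝ)⁻¹ * (if i = k then (1:ℝ) else 0)
          - (N:ℝ)⁻¹ * (if k = j then (1:ℝ) else 0) + (N:ℝ)⁻¹ * (N:ℝ)⁻¹)]
    simp only [Finset.sum_add_distrib, Finset.sum_sub_distrib, mul_ite, ite_mul, mul_one,
      mul_zero, zero_mul, one_mul, Finset.sum_ite_eq, Finset.sum_ite_eq', Finset.mem_univ,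
      if_true, Finset.sum_const, Finset.card_univ, Fintype.card_fin, nsmul_eq_mul]
    have : (N : ℝ) * ((N:ℝ)⁻¹ * (N:ℝ)⁻¹) = (N:ℝ)⁻¹ := by field_simp
    rw [this]
    ring
  have hCC : ∀ {p : ℕ} (x : Matrix (Fin N) (Fin p) ℝ), C * (C * x) = C * x := by
    intro p x; rw [← Matrix.mul_assoc, hC2]
  -- the selection matrix
  set P : Matrix (Fin k) (Fin d) ℝ := Matrix.of fun i j => if f i = j then 1 else 0 with hP
  have hPX : P * XS = XT := by
    ext i j
    simp [hXT, hP, Matrix.mul_apply, Matrix.submatrix_apply, ite_mul, one_mul, zero_mul,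
      Finset.sum_ite_eq, Finset.sum_ite_eq']
  have hPP : P * Pᵀ = 1 := by
    ext i j
    simp [hP, Matrix.mul_apply, Matrix.transpose_apply, Matrix.one_apply, mul_ite, ite_mul,
      mul_one, mul_zero, zero_mul, one_mul, Finset.sum_ite_eq, Finset.sum_ite_eq',
      hf.eq_iff, eq_comm]
  -- abbreviations
  set Z := Y * C with hZ
  set MS := XS * C with hMS
  set MT := XT * C with hMT
  have hZT : Zᵀ = C * Yᵀ := by rw [hZ, Matrix.transpose_mul, hCsymm]
  have hMTt : MTᵀ = C * XTᵀ := by rw [hMT, Matrix.transpose_mul, hCsymm]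
  have hMSt : MSᵀ = C * XSᵀ := by rw [hMS, Matrix.transpose_mul, hCsymm]
  have eT1 : XT * C * XTᵀ = MT * MTᵀ := by
    rw [hMTt, hMT]
    simp only [Matrix.mul_assoc, hCC]
  have eS1 : XS * C * XSᵀ = MS * MSᵀ := by
    rw [hMSt, hMS]
    simp only [Matrix.mul_assoc, hCC]
  have eT2 : XT * C * Yᵀ * Y * C * XTᵀ = MT * Zᵀ * (Z * MTᵀ) := by
    rw [hZT, hMTt, hMT, hZ]
    simp only [Matrix.mul_assoc, hCC]
  have eS2 : XS * C * Yᵀ * Y * C * XSᵀ = MS * Zᵀ * (Z * MSᵀ) := by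
    rw [hZT, hMSt, hMS, hZ]
    simp only [Matrix.mul_assoc, hCC]
  rw [eT1, eT2, eS1, eS2]
  -- express DI(T) as the value at the optimal predictor, embed it, apply the bound
  rw [← DI_opt_eq MT Z hρ]
  set Wo : Matrix (Fin c) (Fin k) ℝ := Z * MTᵀ * (MT * MTᵀ + ρ • 1)⁻¹ with hWo
  have hPM : P * MS = MT := by rw [hMS, ← Matrix.mul_assoc, hPX, hMT]
  have g1 : Wo * P * (MS * Zᵀ) = Wo * (MT * Zᵀ) := by
    rw [Matrix.mul_assoc, ← Matrix.mul_assoc P, hPM]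
  have hmid : P * (MS * MSᵀ + ρ • 1) * Pᵀ = MT * MTᵀ + ρ • 1 := by
    rw [Matrix.mul_add, Matrix.add_mul]
    congr 1
    · rw [← Matrix.mul_assoc P MS MSᵀ, hPM, Matrix.mul_assoc,
        ← Matrix.transpose_mul, hPM]
    · rw [Matrix.mul_smul, Matrix.mul_one, Matrix.smul_mul, hPP]
  have g2 : Wo * P * (MS * MSᵀ + ρ • 1) * (Wo * P)ᵀ
      = Wo * (MT * MTᵀ + ρ • 1) * Woᵀ := by
    have : Wo * P * (MS * MSᵀ + ρ • 1) * (Wo * P)ᵀ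
        = Wo * (P * (MS * MSᵀ + ρ • 1) * Pᵀ) * Woᵀ := by
      rw [Matrix.transpose_mul Wo P]
      simp only [Matrix.mul_assoc]
    rw [this, hmid]
  rw [← g1, ← g2]
  exact DI_opt_core MS Z hρ (Wo * P)
end

section
/- DI achieves its maximum on the full feature set: for every subset A of the row index set, DI(A) ≤ DI(full set), where DI(A) = trace((X_A C X_A^T + ρI)^{-1} X_A C Y^T Y C X_A^T). -/
open Matrix

section aux
variable {n m : Type*} [Fintype n] [DecidableEq n] [Fintype m] [DecidableEq m]

lemma psd_trace_nonneg {M : Matrix n n ℝ} (hM : M.PosSemidef) : 0 ≤ M.trace := by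
  rw [Matrix.trace]
  refine Finset.sum_nonneg fun i _ => ?_
  exact hM.diag_nonneg

lemma psd_trace_mul_nonneg {A B : Matrix n n ℝ} (hA : A.PosSemidef) (hB : B.PosSemidef) :
    0 ≤ (A * B).trace := by
  open scoped MatrixOrder in
  rw [← CFC.sqrt_mul_sqrt_self A hA.nonneg, mul_assoc, trace_mul_comm]
  open scoped MatrixOrder in
  have h := hB.conjTranspose_mul_mul_same (CFC.sqrt A)
  open scoped MatrixOrder in
  rw [(CFC.sqrt_nonneg A).posSemidef.isHermitian.eq] at h
  exact psd_trace_nonneg (by simpa [mul_assoc] using h)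

lemma smul_one_posDef {ρ : ℝ} (hρ : 0 < ρ) : (ρ • (1 : Matrix n n ℝ)).PosDef := by
  rw [smul_one_eq_diagonal]
  exact (Matrix.posDef_diagonal_iff).2 fun _ => hρ

lemma posSemidef_transpose_mul_self' (A : Matrix m n ℝ) : (Aᵀ * A).PosSemidef := by
  simpa [conjTranspose_eq_transpose_of_trivial] using posSemidef_conjTranspose_mul_self A

lemma posSemidef_self_mul_transpose' (A : Matrix m n ℝ) : (A * Aᵀ).PosSemidef := by
  simpa [conjTranspose_eq_transpose_of_trivial] using posSemidef_self_mul_conjTranspose A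

end aux

section aux2
variable {n : Type*} [Fintype n] [DecidableEq n]

lemma inv_sub_inv_posSemidef {P S : Matrix n n ℝ} (hP : P.PosDef) (hS : S.PosSemidef) :
    (P⁻¹ - (P + S)⁻¹).PosSemidef := by
  set Q := P + S with hQdef
  have hQ : Q.PosDef := hP.add_posSemidef hS
  have key : P⁻¹ - Q⁻¹ = P⁻¹ * S * Q⁻¹ := by
    rw [Matrix.inv_sub_inv (by simp [hP.isUnit, hQ.isUnit]), hQdef, add_sub_cancel_left]
  have key2 : P⁻¹ - Q⁻¹ = Q⁻¹ * S * P⁻¹ := by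
    have := Matrix.inv_sub_inv (A := Q) (B := P) (by simp [hP.isUnit, hQ.isUnit])
    rw [hQdef] at this
    have h2 : P - (P + S) = -S := by abel
    rw [h2] at this
    have := congrArg Neg.neg this
    simp only [neg_sub] at this
    rw [this, hQdef]
    noncomm_ring
  have main : P⁻¹ - Q⁻¹ = Q⁻¹ * S * Q⁻¹ + (Q⁻¹ * S) * P⁻¹ * (S * Q⁻¹) := by
    calc P⁻¹ - Q⁻¹ = Q⁻¹ * S * P⁻¹ := key2
      _ = Q⁻¹ * S * Q⁻¹ + Q⁻¹ * S * (P⁻¹ - Q⁻¹) := by noncomm_ring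
      _ = Q⁻¹ * S * Q⁻¹ + (Q⁻¹ * S) * P⁻¹ * (S * Q⁻¹) := by rw [key]; noncomm_ring
  rw [main]
  have h1 : ((Q⁻¹)ᴴ * S * Q⁻¹).PosSemidef := hS.conjTranspose_mul_mul_same Q⁻¹
  rw [hQ.inv.isHermitian.eq] at h1
  have h2 : ((S * Q⁻¹)ᴴ * P⁻¹ * (S * Q⁻¹)).PosSemidef :=
    hP.inv.posSemidef.conjTranspose_mul_mul_same (S * Q⁻¹)
  rw [conjTranspose_mul, hQ.inv.isHermitian.eq, hS.isHermitian.eq] at h2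
  exact h1.add h2

lemma trace_formula {k c' : Type*} [Fintype k] [DecidableEq k] [Fintype c']
    (B : Matrix k n ℝ) (Z : Matrix c' n ℝ) {ρ : ℝ} (hρ : 0 < ρ) :
    ((B * Bᵀ + ρ • 1)⁻¹ * (B * Zᵀ * Z * Bᵀ)).trace
      = (Zᵀ * Z).trace - ρ * ((Bᵀ * B + ρ • 1)⁻¹ * (Zᵀ * Z)).trace := by
  set P := B * Bᵀ + ρ • (1 : Matrix k k ℝ) with hPdef
  set Q := Bᵀ * B + ρ • (1 : Matrix n n ℝ) with hQdef
  have hP : P.PosDef :=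
    Matrix.PosDef.posSemidef_add (posSemidef_self_mul_transpose' B) (smul_one_posDef hρ)
  have hQ : Q.PosDef :=
    Matrix.PosDef.posSemidef_add (posSemidef_transpose_mul_self' B) (smul_one_posDef hρ)
  have h1 : Q * Bᵀ = Bᵀ * P := by
    rw [hPdef, hQdef]
    simp [Matrix.add_mul, Matrix.mul_add, Matrix.smul_mul, Matrix.mul_smul, Matrix.mul_assoc]
  have push : Bᵀ * P⁻¹ = Q⁻¹ * Bᵀ := by
    have h2 := congrArg (fun M => Q⁻¹ * M * P⁻¹) h1
    simp only [← Matrix.mul_assoc] at h2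
    rwa [Matrix.nonsing_inv_mul Q hQ.det_pos.ne'.isUnit, Matrix.one_mul, Matrix.mul_assoc,
      Matrix.mul_nonsing_inv P hP.det_pos.ne'.isUnit, Matrix.mul_one] at h2
  have mid : Bᵀ * P⁻¹ * B = 1 - ρ • Q⁻¹ := by
    rw [push, Matrix.mul_assoc]
    have hBB : Bᵀ * B = Q - ρ • 1 := by rw [hQdef]; abel
    rw [hBB, Matrix.mul_sub, Matrix.nonsing_inv_mul Q hQ.det_pos.ne'.isUnit, Matrix.mul_smul,
      Matrix.mul_one]
  calc (P⁻¹ * (B * Zᵀ * Z * Bᵀ)).trace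
      = ((P⁻¹ * (B * Zᵀ * Z)) * Bᵀ).trace := by simp only [Matrix.mul_assoc]
    _ = (Bᵀ * (P⁻¹ * (B * Zᵀ * Z))).trace := trace_mul_comm _ _
    _ = ((Bᵀ * P⁻¹ * B) * (Zᵀ * Z)).trace := by
        simp only [← Matrix.mul_assoc]
    _ = (Zᵀ * Z).trace - ρ * (Q⁻¹ * (Zᵀ * Z)).trace := by
        rw [mid, Matrix.sub_mul, Matrix.one_mul, trace_sub, Matrix.smul_mul, trace_smul,
          smul_eq_mul]

end aux2

lemma gram_decomp {d N' : ℕ} (B : Matrix (Fin d) (Fin N') ℝ) (A : Finset (Fin d)) :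
    Bᵀ * B =
      (B.submatrix (fun i : {i // i ∈ A} => i.1) id)ᵀ *
        (B.submatrix (fun i : {i // i ∈ A} => i.1) id) +
      (B.submatrix (fun i : {i // i ∈ Aᶜ} => i.1) id)ᵀ *
        (B.submatrix (fun i : {i // i ∈ Aᶜ} => i.1) id) := by
  ext j l
  simp only [Matrix.mul_apply, Matrix.add_apply, transpose_apply, submatrix_apply, id]
  rw [Finset.sum_coe_sort A (fun i => B i j * B i l),
    Finset.sum_coe_sort Aᶜ (fun i => B i j * B i l)]
  exact (Finset.sum_add_sum_compl A _).symm

lemma rewrite_terms {m : Type*} [Fintype m] {N' c' : ℕ} (U : Matrix m (Fin N') ℝ)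
    (Y : Matrix (Fin c') (Fin N') ℝ) (C : Matrix (Fin N') (Fin N') ℝ)
    (hCs : Cᵀ = C) (hCi : C * C = C) :
    U * C * Uᵀ = U * C * (U * C)ᵀ ∧
      U * C * Yᵀ * Y * C * Uᵀ = U * C * (Y * C)ᵀ * (Y * C) * (U * C)ᵀ := by
  have hcc : ∀ (W : Matrix (Fin N') m ℝ), C * (C * W) = C * W := by
    intro W; rw [← Matrix.mul_assoc, hCi]
  constructor
  · simp only [Matrix.transpose_mul, hCs, Matrix.mul_assoc, hcc]
  · simp only [Matrix.transpose_mul, hCs, Matrix.mul_assoc, hcc]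

/-- DI achieves its maximum on the full feature set: for every subset `A` of the
rows, `DI(A) ≤ DI(full)`. -/
theorem DI_max_at_full (d N c : ℕ)
    (X : Matrix (Fin d) (Fin N) ℝ) (Y : Matrix (Fin c) (Fin N) ℝ)
    (C : Matrix (Fin N) (Fin N) ℝ)
    (hC : C = (1 : Matrix (Fin N) (Fin N) ℝ) -
      (N : ℝ)⁻¹ • vecMulVec (fun _ => (1 : ℝ)) (fun _ => (1 : ℝ)))
    (ρ : ℝ) (hρ : 0 < ρ)
    (A : Finset (Fin d))
    (XA : Matrix {i // i ∈ A} (Fin N) ℝ)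
    (hXA : XA = X.submatrix (fun i : {i // i ∈ A} => i.1) id) :
    ((XA * C * XAᵀ + ρ • (1 : Matrix {i // i ∈ A} {i // i ∈ A} ℝ))⁻¹ *
        (XA * C * Yᵀ * Y * C * XAᵀ)).trace ≤
      ((X * C * Xᵀ + ρ • (1 : Matrix (Fin d) (Fin d) ℝ))⁻¹ *
        (X * C * Yᵀ * Y * C * Xᵀ)).trace := by
  subst hXA
  have hCs : Cᵀ = C := by
    ext i j
    simp [hC, Matrix.one_apply, vecMulVec_apply, eq_comm]
  have hCi : C * C = C := by
    rcases eq_or_ne N 0 with h0 | h0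
    · subst h0; ext i j; exact i.elim0
    · have hN : (N : ℝ) ≠ 0 := Nat.cast_ne_zero.mpr h0
      rw [hC]
      set J : Matrix (Fin N) (Fin N) ℝ := vecMulVec (fun _ => (1:ℝ)) (fun _ => (1:ℝ)) with hJ
      set a : ℝ := (N : ℝ)⁻¹ with haa
      have hJJ : J * J = (N : ℝ) • J := by
        ext i j; simp [hJ, Matrix.mul_apply, vecMulVec_apply]
      have hstep : (a • J) * (a • J) = a • J := by
        rw [Matrix.smul_mul, Matrix.mul_smul, smul_smul, hJJ, smul_smul]
        have ha : a * a * (N:ℝ) = a := by rw [haa]; field_simp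
        rw [ha]
      rw [Matrix.mul_sub, Matrix.mul_one, Matrix.sub_mul, Matrix.one_mul, hstep]
      abel
  obtain ⟨e1, e2⟩ := rewrite_terms X Y C hCs hCi
  obtain ⟨f1, f2⟩ := rewrite_terms (X.submatrix (fun i : {i // i ∈ A} => i.1) id) Y C hCs hCi
  rw [e1, e2, f1, f2, trace_formula (X * C) (Y * C) hρ,
    trace_formula (X.submatrix (fun i : {i // i ∈ A} => i.1) id * C) (Y * C) hρ]
  have hBA : (X.submatrix (fun i : {i // i ∈ A} => i.1) id) * C =
      (X * C).submatrix (fun i : {i // i ∈ A} => i.1) id := rfl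
  rw [hBA]
  set B := X * C with hBdef
  set BA := B.submatrix (fun i : {i // i ∈ A} => i.1) id with hBAdef
  set M := B.submatrix (fun i : {i // i ∈ Aᶜ} => i.1) id with hMdef
  set W := (Y * C)ᵀ * (Y * C) with hWdef
  have hW : W.PosSemidef := posSemidef_transpose_mul_self' _
  have hQA : (BAᵀ * BA + ρ • (1 : Matrix (Fin N) (Fin N) ℝ)).PosDef :=
    Matrix.PosDef.posSemidef_add (posSemidef_transpose_mul_self' _) (smul_one_posDef hρ)
  have hS : (Mᵀ * M).PosSemidef := posSemidef_transpose_mul_self' _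
  have hd := inv_sub_inv_posSemidef hQA hS
  have hsum : (BAᵀ * BA + ρ • (1 : Matrix (Fin N) (Fin N) ℝ)) + Mᵀ * M
      = Bᵀ * B + ρ • 1 := by
    rw [gram_decomp B A]; abel
  rw [hsum] at hd
  have htr := psd_trace_mul_nonneg hd hW
  rw [Matrix.sub_mul, trace_sub] at htr
  have hmul : ρ * ((Bᵀ * B + ρ • 1)⁻¹ * W).trace
      ≤ ρ * ((BAᵀ * BA + ρ • 1)⁻¹ * W).trace :=
    mul_le_mul_of_nonneg_left (by linarith) hρ.le
  linarith
end

section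
/- Generalized Rayleigh quotient maximizer: for symmetric positive definite A (= K̄ + ρI) and K_B = M M^T with M = X C Y^T, the function F ↦ trace((F^T A F)^{-1} F^T K_B F) over d×c matrices F of full column rank attains the value trace(A^{-1} K_B) at F* = A^{-1} M (assuming F*^T A F* is invertible), and trace(A^{-1} K_B) is an upper bound: trace((F^T A F)^{-1} F^T K_B F) ≤ trace(A^{-1} K_B) for all full-column-rank F. -/
open Matrix

private lemma trace_transpose_mul_self_nonneg' {a b : ℕ} (X : Matrix (Fin a) (Fin b) ℝ) :
    0 ≤ (Xᵀ * X).trace := by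
  rw [Matrix.trace]
  refine Finset.sum_nonneg fun j _ => ?_
  simp only [Matrix.diag_apply, Matrix.mul_apply, Matrix.transpose_apply]
  exact Finset.sum_nonneg fun i _ => mul_self_nonneg _

private lemma rayleigh_key {d c : ℕ} (N G : Matrix (Fin d) (Fin c) ℝ)
    (S : Matrix (Fin c) (Fin c) ℝ) (hGG : Gᵀ * G = S) (hSinv : (S⁻¹)ᵀ = S⁻¹)
    (hS : IsUnit S.det) :
    (S⁻¹ * (Gᵀ * N * (Nᵀ * G))).trace ≤ (Nᵀ * N).trace := by
  have hPsym : (G * S⁻¹ * Gᵀ)ᵀ = G * S⁻¹ * Gᵀ := by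
    simp [Matrix.transpose_mul, hSinv, Matrix.mul_assoc]
  have hPP : G * S⁻¹ * Gᵀ * (G * S⁻¹ * Gᵀ) = G * S⁻¹ * Gᵀ := by
    have h1 : G * S⁻¹ * Gᵀ * (G * S⁻¹ * Gᵀ) = G * (S⁻¹ * (Gᵀ * G) * (S⁻¹ * Gᵀ)) := by
      simp [Matrix.mul_assoc]
    rw [h1, hGG, Matrix.nonsing_inv_mul S hS, Matrix.one_mul]
    simp [Matrix.mul_assoc]
  have hQsym : (1 - G * S⁻¹ * Gᵀ)ᵀ = 1 - G * S⁻¹ * Gᵀ := by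
    rw [Matrix.transpose_sub, Matrix.transpose_one, hPsym]
  have hQQ : (1 - G * S⁻¹ * Gᵀ) * (1 - G * S⁻¹ * Gᵀ) = 1 - G * S⁻¹ * Gᵀ := by
    simp only [Matrix.mul_sub, Matrix.sub_mul, Matrix.one_mul, Matrix.mul_one, hPP]
    abel
  have key0 : 0 ≤ (((1 - G * S⁻¹ * Gᵀ) * N)ᵀ * ((1 - G * S⁻¹ * Gᵀ) * N)).trace :=
    trace_transpose_mul_self_nonneg' _
  have h2 : (Nᵀ * (G * S⁻¹ * Gᵀ * N)).trace = (S⁻¹ * (Gᵀ * N * (Nᵀ * G))).trace := by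
    rw [show Nᵀ * (G * S⁻¹ * Gᵀ * N) = (Nᵀ * G) * (S⁻¹ * Gᵀ * N) from by simp [Matrix.mul_assoc],
      Matrix.trace_mul_comm]
    congr 1
    simp [Matrix.mul_assoc]
  have expand : (((1 - G * S⁻¹ * Gᵀ) * N)ᵀ * ((1 - G * S⁻¹ * Gᵀ) * N)).trace
      = (Nᵀ * N).trace - (S⁻¹ * (Gᵀ * N * (Nᵀ * G))).trace := by
    rw [Matrix.transpose_mul, hQsym, Matrix.mul_assoc Nᵀ,
      ← Matrix.mul_assoc (1 - G * S⁻¹ * Gᵀ), hQQ, Matrix.sub_mul, Matrix.one_mul,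
      Matrix.mul_sub, Matrix.trace_sub, h2]
  linarith [expand ▸ key0]

/-- Generalized Rayleigh quotient maximizer: for symmetric positive definite `A`
and `K_B = M Mᵀ`, the quotient `trace((Fᵀ A F)⁻¹ Fᵀ K_B F)` attains the value
`trace(A⁻¹ K_B)` at `F* = A⁻¹ M`, and this is an upper bound over all `F` with
`Fᵀ A F` invertible. -/
theorem rayleigh_quotient_maximizer (d c : ℕ)
    (A : Matrix (Fin d) (Fin d) ℝ) (hA : A.PosDef)
    (M : Matrix (Fin d) (Fin c) ℝ)
    (KB : Matrix (Fin d) (Fin d) ℝ) (hKB : KB = M * Mᵀ)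
    (Fstar : Matrix (Fin d) (Fin c) ℝ) (hFstar : Fstar = A⁻¹ * M) :
    (IsUnit (Fstarᵀ * A * Fstar).det →
      ((Fstarᵀ * A * Fstar)⁻¹ * (Fstarᵀ * KB * Fstar)).trace = (A⁻¹ * KB).trace) ∧
    (∀ F : Matrix (Fin d) (Fin c) ℝ, IsUnit (Fᵀ * A * F).det →
      ((Fᵀ * A * F)⁻¹ * (Fᵀ * KB * F)).trace ≤ (A⁻¹ * KB).trace) := by
  have hAdet : IsUnit A.det := hA.det_pos.ne'.isUnit
  have hAsym : Aᵀ = A := by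
    have := hA.1
    rwa [Matrix.IsHermitian, conjTranspose_eq_transpose_of_trivial] at this
  have hAinvsym : (A⁻¹)ᵀ = A⁻¹ := by rw [Matrix.transpose_nonsing_inv, hAsym]
  -- square root of A
  open scoped MatrixOrder in
  have hBB : CFC.sqrt A * CFC.sqrt A = A := CFC.sqrt_mul_sqrt_self A hA.posSemidef.nonneg
  open scoped MatrixOrder in
  generalize hBdef : CFC.sqrt A = B at hBB
  have hBsym : Bᵀ = B := by
    open scoped MatrixOrder in
    have := (CFC.sqrt_nonneg A).posSemidef.1
    rw [hBdef] at this
    rwa [Matrix.IsHermitian, conjTranspose_eq_transpose_of_trivial] at this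
  have hBdet : IsUnit B.det := by
    have h : B.det * B.det = A.det := by rw [← Matrix.det_mul, hBB]
    refine isUnit_iff_ne_zero.2 fun h0 => ?_
    rw [h0, mul_zero] at h
    exact hA.det_pos.ne' h.symm
  have hBBinv : B * B⁻¹ = 1 := Matrix.mul_nonsing_inv B hBdet
  have hBinvB : B⁻¹ * B = 1 := Matrix.nonsing_inv_mul B hBdet
  have hBinvsym : (B⁻¹)ᵀ = B⁻¹ := by rw [Matrix.transpose_nonsing_inv, hBsym]
  have hAinv : A⁻¹ = B⁻¹ * B⁻¹ := by rw [← hBB, Matrix.mul_inv_rev]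
  constructor
  · -- equality at Fstar
    intro hS
    have hSe : Fstarᵀ * A * Fstar = Mᵀ * A⁻¹ * M := by
      rw [hFstar, Matrix.transpose_mul, hAinvsym, Matrix.mul_assoc (Mᵀ * A⁻¹),
        ← Matrix.mul_assoc A, Matrix.mul_nonsing_inv A hAdet, Matrix.one_mul]
    have hS' : IsUnit (Mᵀ * A⁻¹ * M).det := by rwa [hSe] at hS
    have hK : Fstarᵀ * KB * Fstar = (Mᵀ * A⁻¹ * M) * (Mᵀ * A⁻¹ * M) := by
      rw [hFstar, hKB, Matrix.transpose_mul, hAinvsym]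
      simp [Matrix.mul_assoc]
    rw [hSe, hK, ← Matrix.mul_assoc, Matrix.nonsing_inv_mul _ hS', Matrix.one_mul, hKB,
      Matrix.mul_assoc, Matrix.trace_mul_comm]
    congr 1
    simp [Matrix.mul_assoc]
  · -- upper bound
    intro F hS
    have hSsym : (Fᵀ * A * F)ᵀ = Fᵀ * A * F := by
      rw [Matrix.transpose_mul, Matrix.transpose_mul, hAsym, Matrix.transpose_transpose,
        Matrix.mul_assoc]
    have hSinv : ((Fᵀ * A * F)⁻¹)ᵀ = (Fᵀ * A * F)⁻¹ := by
      rw [Matrix.transpose_nonsing_inv, hSsym]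
    have hGG : (B * F)ᵀ * (B * F) = Fᵀ * A * F := by
      rw [Matrix.transpose_mul, hBsym, ← hBB]
      simp [Matrix.mul_assoc]
    have e1 : (B * F)ᵀ * (B⁻¹ * M) = Fᵀ * M := by
      rw [Matrix.transpose_mul, hBsym, Matrix.mul_assoc Fᵀ, ← Matrix.mul_assoc B, hBBinv,
        Matrix.one_mul]
    have e2 : (B⁻¹ * M)ᵀ * (B * F) = Mᵀ * F := by
      rw [Matrix.transpose_mul, hBinvsym, Matrix.mul_assoc Mᵀ, ← Matrix.mul_assoc B⁻¹, hBinvB,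
        Matrix.one_mul]
    have h1 : Fᵀ * KB * F = (B * F)ᵀ * (B⁻¹ * M) * ((B⁻¹ * M)ᵀ * (B * F)) := by
      rw [hKB, e1, e2]
      simp [Matrix.mul_assoc]
    have hRHS : (A⁻¹ * KB).trace = ((B⁻¹ * M)ᵀ * (B⁻¹ * M)).trace := by
      have e : (B⁻¹ * M)ᵀ * (B⁻¹ * M) = Mᵀ * (B⁻¹ * (B⁻¹ * M)) := by
        rw [Matrix.transpose_mul, hBinvsym, Matrix.mul_assoc]
      rw [hKB, hAinv, e, Matrix.trace_mul_comm Mᵀ (B⁻¹ * (B⁻¹ * M))]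
      congr 1
      simp [Matrix.mul_assoc]
    calc ((Fᵀ * A * F)⁻¹ * (Fᵀ * KB * F)).trace
        = ((Fᵀ * A * F)⁻¹ * ((B * F)ᵀ * (B⁻¹ * M) * ((B⁻¹ * M)ᵀ * (B * F)))).trace := by
          rw [h1]
      _ ≤ ((B⁻¹ * M)ᵀ * (B⁻¹ * M)).trace := rayleigh_key _ _ _ hGG hSinv hS
      _ = (A⁻¹ * KB).trace := hRHS.symm
end
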